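/- Let w be a finite Boolean list containing at least one 'true' entry, and let u be the left-godfather node of w, i.e. the path obtained from w by deleting the final (possibly empty) block of 'false' entries together with the preceding 'true' entry (so that StBr(u) = L(w)). Then StBr(w) <_Q R(u). -/

import Mathlib

/-- One step of the Stern–Brocot state-passing recursion: the state is the pair
`(L, R)` of bounds; a `false` step (left child) replaces `R` by `L + R`, a `true`
step (right child) replaces `L` by `L + R`. -/
def sbStep : ((ℕ × ℕ) × (ℕ × ℕ)) → Bool → ((ℕ × ℕ) × (ℕ × ℕ))
  | (L, R), false => (L, (L.1 + R.1, L.2 + R.2))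
  | (L, R), true  => ((L.1 + R.1, L.2 + R.2), R)

/-- The bounds `(L(w), R(w))` of the node of the Stern–Brocot tree addressed by
the path `w`, starting from `((0,1), (1,0))` at the root. -/
def sbBounds (w : List Bool) : (ℕ × ℕ) × (ℕ × ℕ) :=
  w.foldl sbStep ((0, 1), (1, 0))

/-- The left godfather pair `L(w)`. -/
def sbL (w : List Bool) : ℕ × ℕ := (sbBounds w).1

/-- The right godfather pair `R(w)`. -/
def sbR (w : List Bool) : ℕ × ℕ := (sbBounds w).2

/-- The Stern–Brocot pair `StBr(w) = L(w) + R(w)` (componentwise sum). -/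
def stBr (w : List Bool) : ℕ × ℕ :=
  ((sbL w).1 + (sbR w).1, (sbL w).2 + (sbR w).2)

/-- The order `<_Q` on pairs of nonnegative integers:
`(r,s) <_Q (r',s')` iff `r·s' < r'·s`. -/
def ltQ (p q : ℕ × ℕ) : Prop := p.1 * q.2 < q.1 * p.2

/-- The order `≤_Q` on pairs of nonnegative integers:
`(r,s) ≤_Q (r',s')` iff `r·s' ≤ r'·s`. -/
def leQ (p q : ℕ × ℕ) : Prop := p.1 * q.2 ≤ q.1 * p.2

/-- The weight `|(r,s)| := r + s` of a pair. -/
def wtQ (p : ℕ × ℕ) : ℕ := p.1 + p.2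


def sbInv (s : (ℕ × ℕ) × (ℕ × ℕ)) : Prop :=
  s.2.1 * s.1.2 = s.1.1 * s.2.2 + 1

lemma sbInv_step (s : (ℕ × ℕ) × (ℕ × ℕ)) (b : Bool) (h : sbInv s) :
    sbInv (sbStep s b) := by
  obtain ⟨⟨l1, l2⟩, ⟨r1, r2⟩⟩ := s
  cases b <;> simp only [sbStep, sbInv] at * <;> ring_nf <;> ring_nf at h <;> nlinarith

lemma sbInv_foldl (w : List Bool) :
    ∀ s, sbInv s → sbInv (w.foldl sbStep s) := by
  induction w with
  | nil => intro s h; exact h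
  | cons b t ih => intro s h; exact ih _ (sbInv_step s b h)

lemma sbInv_bounds (w : List Bool) : sbInv (sbBounds w) :=
  sbInv_foldl w _ (by simp [sbInv])

lemma foldl_replicate_false (n : ℕ) :
    ∀ s : (ℕ × ℕ) × (ℕ × ℕ),
      (List.replicate n false).foldl sbStep s =
        (s.1, (n * s.1.1 + s.2.1, n * s.1.2 + s.2.2)) := by
  induction n with
  | zero => intro s; simp
  | succ n ih =>
    intro s
    rw [List.replicate_succ, List.foldl_cons, ih]
    obtain ⟨⟨l1, l2⟩, ⟨r1, r2⟩⟩ := s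
    simp [sbStep]
    ring_nf
    constructor <;> trivial

/-- Let `w` contain at least one `true` entry, and let `u` be the left-godfather
node of `w`: `w = u ++ true :: (replicate n false)` for some `n`, i.e. `u` is
obtained from `w` by deleting the final block of `false` entries together with
the preceding `true` entry (so `StBr(u) = L(w)`). Then `StBr(w) <_Q R(u)`. -/
theorem sternBrocot_lt_rgf_of_lgf (w u : List Bool) (n : ℕ)
    (hw : w = u ++ true :: List.replicate n false) :
    ltQ (stBr w) (sbR u) := by
  have hinv := sbInv_bounds u
  have hb : sbBounds w = (List.replicate n false).foldl sbStep (sbStep (sbBounds u) true) := by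
    rw [hw]; simp [sbBounds, List.foldl_append]
  rw [foldl_replicate_false] at hb
  set L := (sbBounds u).1 with hL
  set R := (sbBounds u).2 with hR
  have hstep : sbStep (sbBounds u) true = ((L.1 + R.1, L.2 + R.2), R) := by
    rw [hL, hR]; rfl
  rw [hstep] at hb
  simp only [sbInv] at hinv
  simp only [ltQ, stBr, sbL, sbR, hb]
  simp only [← hR]
  have h1 : 0 < n + 1 := Nat.succ_pos n
  nlinarith [hinv, Nat.mul_le_mul_left n hinv.le]
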